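/- Let S be a finite type, let ρ₀ be a probability mass function on S, and let P¹, P² : S → PMF(S) be probability kernels satisfying D_TV(P¹(s), P²(s)) ≤ δ for every s ∈ S. Define the time-t state marginals by μⁱ₀ = ρ₀ and μⁱ_{t+1}(s') = ∑_{s ∈ S} μⁱ_t(s) · Pⁱ(s)(s') for i = 1, 2. Then for every t ∈ ℕ, D_TV(μ¹_t, μ²_t) ≤ t · δ. -/

import Mathlib

open scoped BigOperators

/-- Total variation distance between two PMFs on a finite type. -/
noncomputable def tv {X : Type*} [Fintype X] (p q : PMF X) : ℝ :=
  (1 / 2) * ∑ x, |(p x).toReal - (q x).toReal|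

lemma tv_nonneg' {X : Type*} [Fintype X] (p q : PMF X) : 0 ≤ tv p q := by
  unfold tv
  positivity

lemma sum_toReal_one' {X : Type*} [Fintype X] (p : PMF X) : ∑ x, (p x).toReal = 1 := by
  have h : ∑ x, p x = 1 := by rw [← tsum_fintype (L := .unconditional _)]; exact p.tsum_coe
  have h2 := ENNReal.toReal_sum (s := Finset.univ) (f := fun x => p x)
    (fun x _ => p.apply_ne_top x)
  rw [← h2, h, ENNReal.toReal_one]

/-- If two Markov kernels satisfy `D_TV(P¹(s), P²(s)) ≤ δ` for every `s`,
then the state marginals of the two Markov chains started from the same initial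
distribution `ρ₀` satisfy `D_TV(μ¹_t, μ²_t) ≤ t · δ` for every `t ∈ ℕ`. -/
theorem tv_marginals_le {S : Type*} [Fintype S]
    (ρ₀ : PMF S) (P₁ P₂ : S → PMF S) (δ : ℝ)
    (hP : ∀ s, tv (P₁ s) (P₂ s) ≤ δ)
    (μ₁ μ₂ : ℕ → PMF S)
    (hμ₁0 : μ₁ 0 = ρ₀) (hμ₂0 : μ₂ 0 = ρ₀)
    (hμ₁ : ∀ t s', μ₁ (t + 1) s' = ∑ s, μ₁ t s * P₁ s s')
    (hμ₂ : ∀ t s', μ₂ (t + 1) s' = ∑ s, μ₂ t s * P₂ s s') :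
    ∀ t : ℕ, tv (μ₁ t) (μ₂ t) ≤ t * δ := by
  have hδ : 0 ≤ δ := by
    obtain ⟨s, _⟩ := ρ₀.support_nonempty
    exact le_trans (tv_nonneg' _ _) (hP s)
  intro t
  induction t with
  | zero => simp [tv, hμ₁0, hμ₂0]
  | succ t ih =>
    have expand1 : ∀ s', (μ₁ (t+1) s').toReal = ∑ s, (μ₁ t s).toReal * (P₁ s s').toReal := by
      intro s'
      rw [hμ₁ t s', ENNReal.toReal_sum]
      · simp [ENNReal.toReal_mul]
      · intro s _; exact ENNReal.mul_ne_top ((μ₁ t).apply_ne_top s) ((P₁ s).apply_ne_top s')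
    have expand2 : ∀ s', (μ₂ (t+1) s').toReal = ∑ s, (μ₂ t s).toReal * (P₂ s s').toReal := by
      intro s'
      rw [hμ₂ t s', ENNReal.toReal_sum]
      · simp [ENNReal.toReal_mul]
      · intro s _; exact ENNReal.mul_ne_top ((μ₂ t).apply_ne_top s) ((P₂ s).apply_ne_top s')
    have hsumP : ∀ s : S, ∑ s', |(P₁ s s').toReal - (P₂ s s').toReal| ≤ 2 * δ := by
      intro s
      have := hP s
      unfold tv at this
      linarith
    have key : tv (μ₁ (t+1)) (μ₂ (t+1)) ≤ tv (μ₁ t) (μ₂ t) + δ := by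
      unfold tv
      have step1 : ∑ s', |(μ₁ (t+1) s').toReal - (μ₂ (t+1) s').toReal|
          ≤ ∑ s', ∑ s, (|(μ₁ t s).toReal - (μ₂ t s).toReal| * (P₁ s s').toReal
              + (μ₂ t s).toReal * |(P₁ s s').toReal - (P₂ s s').toReal|) := by
        refine Finset.sum_le_sum fun s' _ => ?_
        rw [expand1 s', expand2 s', ← Finset.sum_sub_distrib]
        refine (Finset.abs_sum_le_sum_abs _ _).trans ?_
        refine Finset.sum_le_sum fun s _ => ?_
        have heq : (μ₁ t s).toReal * (P₁ s s').toReal - (μ₂ t s).toReal * (P₂ s s').toReal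
            = ((μ₁ t s).toReal - (μ₂ t s).toReal) * (P₁ s s').toReal
              + (μ₂ t s).toReal * ((P₁ s s').toReal - (P₂ s s').toReal) := by ring
        rw [heq]
        refine (abs_add_le _ _).trans ?_
        rw [abs_mul, abs_mul, abs_of_nonneg ENNReal.toReal_nonneg,
          abs_of_nonneg ENNReal.toReal_nonneg]
      have step2 : ∑ s', ∑ s, (|(μ₁ t s).toReal - (μ₂ t s).toReal| * (P₁ s s').toReal
              + (μ₂ t s).toReal * |(P₁ s s').toReal - (P₂ s s').toReal|)
          = ∑ s, |(μ₁ t s).toReal - (μ₂ t s).toReal|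
            + ∑ s, (μ₂ t s).toReal * ∑ s', |(P₁ s s').toReal - (P₂ s s').toReal| := by
        rw [Finset.sum_comm]
        rw [← Finset.sum_add_distrib]
        refine Finset.sum_congr rfl fun s _ => ?_
        rw [Finset.sum_add_distrib, ← Finset.mul_sum, ← Finset.mul_sum,
          sum_toReal_one' (P₁ s), mul_one]
      have step3 : ∑ s, (μ₂ t s).toReal * ∑ s', |(P₁ s s').toReal - (P₂ s s').toReal|
          ≤ 2 * δ := by
        calc ∑ s, (μ₂ t s).toReal * ∑ s', |(P₁ s s').toReal - (P₂ s s').toReal|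
            ≤ ∑ s, (μ₂ t s).toReal * (2 * δ) := by
              refine Finset.sum_le_sum fun s _ => ?_
              exact mul_le_mul_of_nonneg_left (hsumP s) ENNReal.toReal_nonneg
          _ = 2 * δ := by rw [← Finset.sum_mul, sum_toReal_one' (μ₂ t), one_mul]
      have := step1.trans (le_of_eq step2)
      linarith
    have : tv (μ₁ (t+1)) (μ₂ (t+1)) ≤ t * δ + δ := le_trans key (by linarith)
    calc tv (μ₁ (t+1)) (μ₂ (t+1)) ≤ t * δ + δ := this
      _ = (↑(t+1) : ℝ) * δ := by push_cast; ring
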